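/- The function u decomposes as u = u_S + u_BL^L + u_BL^R on [0,1], where u_S = G₀, u_BL^L(x) = ε G₁(x) exp(−(1/ε)∫₀ˣ √a(s) ds) and u_BL^R(x) = ε G₂(x) exp(−(1/ε)∫ₓ¹ √a(s) ds), and there exist constants C_j (0 ≤ j ≤ q), depending only on M, q and the C^q norm of a but not on ε, such that for all x ∈ [0,1] and 0 ≤ j ≤ q: |u_S^{(j)}(x)| ≤ C_j, |(u_BL^L)^{(j)}(x)| ≤ C_j ε^{1−j} e^{−βx/ε} and |(u_BL^R)^{(j)}(x)| ≤ C_j ε^{1−j} e^{−β(1−x)/ε}, where β = √a₀. -/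

import Mathlib

open Real Set MeasureTheory intervalIntegral

/-! Auxiliary definitions and lemmas. -/

noncomputable def sqrtC : ℕ → ℝ
  | 0 => 1
  | (n+1) => sqrtC n * ((1:ℝ)/2 - n)

lemma iteratedDeriv_sqrt (n : ℕ) : ∀ {x : ℝ}, 0 < x →
    iteratedDeriv n Real.sqrt x = sqrtC n * x ^ ((1:ℝ)/2 - n) := by
  induction n with
  | zero =>
    intro x hx
    simp [sqrtC, Real.sqrt_eq_rpow]
  | succ n ih =>
    intro x hx
    rw [iteratedDeriv_succ]
    have hev : deriv (iteratedDeriv n Real.sqrt) x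
        = deriv (fun y => sqrtC n * y ^ ((1:ℝ)/2 - (n:ℝ))) x := by
      apply Filter.EventuallyEq.deriv_eq
      filter_upwards [isOpen_Ioi.mem_nhds (show x ∈ Ioi 0 from hx)] with y hy
      exact ih hy
    rw [hev, deriv_const_mul _ (Real.differentiableAt_rpow_const_of_ne _ hx.ne'),
      Real.deriv_rpow_const]
    have hexp : (1:ℝ)/2 - (n:ℝ) - 1 = (1:ℝ)/2 - ((n+1 : ℕ):ℝ) := by push_cast; ring
    rw [hexp, show sqrtC (n+1) = sqrtC n * ((1:ℝ)/2 - n) from rfl]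
    ring

lemma abs_iteratedDeriv_sqrt_le (n : ℕ) {a₀ b x : ℝ} (ha₀ : 0 < a₀) (hx : a₀ ≤ x) (hxb : x ≤ b) :
    |iteratedDeriv n Real.sqrt x| ≤ |sqrtC n| * (Real.sqrt b + a₀ ^ ((1:ℝ)/2 - n)) := by
  have hx0 : 0 < x := ha₀.trans_le hx
  rw [iteratedDeriv_sqrt n hx0, abs_mul, abs_of_nonneg (Real.rpow_nonneg hx0.le _)]
  apply mul_le_mul_of_nonneg_left _ (abs_nonneg _)
  rcases Nat.eq_zero_or_pos n with h | h
  · subst h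
    simp only [Nat.cast_zero, sub_zero]
    rw [← Real.sqrt_eq_rpow]
    have : Real.sqrt x ≤ Real.sqrt b := Real.sqrt_le_sqrt hxb
    nlinarith [Real.rpow_nonneg ha₀.le ((1:ℝ)/2 - ((0:ℕ):ℝ))]
  · have hz : (1:ℝ)/2 - (n:ℝ) ≤ 0 := by
      have : (1:ℝ) ≤ (n:ℝ) := by exact_mod_cast h
      linarith
    have := Real.rpow_le_rpow_of_nonpos ha₀ hx hz
    nlinarith [Real.sqrt_nonneg b]

lemma phi_deriv_bound (q : ℕ) (M a₀ Csq : ℝ) (ha₀ : 0 < a₀) (hM : 0 < M)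
    (hCsq : ∀ i, i ≤ q → |sqrtC i| * (Real.sqrt M + a₀ ^ ((1:ℝ)/2 - i)) ≤ Csq)
    (a : ℝ → ℝ) (ha : ContDiffOn ℝ q a (Icc 0 1))
    (hlb : ∀ x ∈ Icc (0:ℝ) 1, a₀ ≤ a x)
    (hub : ∀ m, m ≤ q → ∀ x ∈ Icc (0:ℝ) 1, |iteratedDerivWithin m a (Icc 0 1) x| ≤ M) :
    ∀ n, n ≤ q → ∀ x ∈ Icc (0:ℝ) 1,
      |iteratedDerivWithin n (fun y => Real.sqrt (a y)) (Icc 0 1) x|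
        ≤ (q.factorial : ℝ) * Csq * (1 + M) ^ q := by
  intro n hn x hx
  have hCsq0 : 0 ≤ Csq := by
    have := hCsq 0 (Nat.zero_le _)
    have h1 : (0:ℝ) ≤ |sqrtC 0| * (Real.sqrt M + a₀ ^ ((1:ℝ)/2 - (0:ℕ))) := by
      have := Real.rpow_nonneg ha₀.le ((1:ℝ)/2 - ((0:ℕ):ℝ))
      have := Real.sqrt_nonneg M
      positivity
    linarith
  have hsU : UniqueDiffOn ℝ (Icc (0:ℝ) 1) := uniqueDiffOn_Icc one_pos
  have htO : IsOpen (Ioi (a₀/2)) := isOpen_Ioi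
  have htU : UniqueDiffOn ℝ (Ioi (a₀/2)) := htO.uniqueDiffOn
  have hmaps : MapsTo a (Icc 0 1) (Ioi (a₀/2)) := fun y hy => lt_of_lt_of_le (by linarith) (hlb y hy)
  have hg : ContDiffOn ℝ q Real.sqrt (Ioi (a₀/2)) := fun y hy =>
    (Real.contDiffAt_sqrt (show y ≠ 0 by
      have : a₀/2 < y := hy
      intro h; rw [h] at this; linarith)).contDiffWithinAt
  have key := norm_iteratedFDerivWithin_comp_le (𝕜 := ℝ) (g := Real.sqrt) (f := a)
    (n := n) (s := Icc (0:ℝ) 1) (t := Ioi (a₀/2)) (N := (q : WithTop ℕ∞))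
    hg ha (by exact_mod_cast hn) htU hsU hmaps hx
    (C := Csq) (D := 1 + M)
    (fun i hi => by
      have hax : a₀ ≤ a x := hlb x hx
      have haxM : a x ≤ M := by
        have := hub 0 (Nat.zero_le _) x hx
        rw [iteratedDerivWithin_zero] at this
        exact (abs_le.1 this).2
      have heq : iteratedFDerivWithin ℝ i Real.sqrt (Ioi (a₀/2)) (a x)
          = iteratedFDeriv ℝ i Real.sqrt (a x) :=
        iteratedFDerivWithin_of_isOpen i htO (hmaps hx)
      rw [heq, norm_iteratedFDeriv_eq_norm_iteratedDeriv, Real.norm_eq_abs]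
      exact (abs_iteratedDeriv_sqrt_le i ha₀ hax haxM).trans (hCsq i (hi.trans hn)))
    (fun i h1i hi => by
      rw [norm_iteratedFDerivWithin_eq_norm_iteratedDerivWithin, Real.norm_eq_abs]
      calc |iteratedDerivWithin i a (Icc 0 1) x| ≤ M := hub i (hi.trans hn) x hx
        _ ≤ 1 + M := by linarith
        _ ≤ (1 + M) ^ i := le_self_pow₀ (by linarith) (by omega))
  have heq2 : |iteratedDerivWithin n (fun y => Real.sqrt (a y)) (Icc 0 1) x|
      = ‖iteratedFDerivWithin ℝ n (Real.sqrt ∘ a) (Icc (0:ℝ) 1) x‖ := by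
    rw [← Real.norm_eq_abs, ← norm_iteratedFDerivWithin_eq_norm_iteratedDerivWithin]
    rfl
  rw [heq2]
  refine key.trans ?_
  have h1 : ((n.factorial : ℝ)) ≤ (q.factorial : ℝ) := by
    exact_mod_cast Nat.factorial_le hn
  gcongr
  · linarith

lemma bl_induction (q : ℕ) (M Dphi ε σ : ℝ) (hM : 0 < M) (hD : 0 ≤ Dphi)
    (hε : 0 < ε) (hε1 : ε ≤ 1) (hσ : |σ| = 1)
    (φ G E : ℝ → ℝ)
    (hφ : ContDiffOn ℝ q φ (Icc 0 1))
    (hφb : ∀ n, n ≤ q → ∀ x ∈ Icc (0:ℝ) 1, |iteratedDerivWithin n φ (Icc 0 1) x| ≤ Dphi)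
    (hG : ContDiffOn ℝ q G (Icc 0 1))
    (hGb : ∀ m, m ≤ q → ∀ x ∈ Icc (0:ℝ) 1, |iteratedDerivWithin m G (Icc 0 1) x| ≤ M)
    (hE : ∀ x ∈ Icc (0:ℝ) 1, HasDerivWithinAt E (σ * φ x / ε * E x) (Icc 0 1) x) :
    ∀ j, j ≤ q → ∃ H : ℝ → ℝ, ContDiffOn ℝ ((q - j : ℕ)) H (Icc 0 1) ∧
      (∀ m, m ≤ q - j → ∀ x ∈ Icc (0:ℝ) 1,
        |iteratedDerivWithin m H (Icc 0 1) x| ≤ M * (1 + 2^q * Dphi)^j) ∧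
      (∀ x ∈ Icc (0:ℝ) 1,
        iteratedDerivWithin j (fun y => ε * G y * E y) (Icc 0 1) x
          = ε ^ ((1:ℤ) - (j:ℤ)) * H x * E x) := by
  have hsU : UniqueDiffOn ℝ (Icc (0:ℝ) 1) := uniqueDiffOn_Icc one_pos
  intro j
  induction j with
  | zero =>
    intro _
    refine ⟨G, by simpa using hG, ?_, ?_⟩
    · intro m hm x hx
      simpa using hGb m (by omega) x hx
    · intro x hx
      rw [iteratedDerivWithin_zero]
      norm_num
  | succ j ih =>
    intro hj1
    obtain ⟨H, hHc, hHb, hHeq⟩ := ih (by omega)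
    have hqj : 1 ≤ q - j := by omega
    have hsub : q - (j+1) + 1 = q - j := by omega
    have hder : ContDiffOn ℝ ((q - (j+1) : ℕ)) (derivWithin H (Icc 0 1)) (Icc 0 1) := by
      apply hHc.derivWithin hsU
      rw [show ((q - (j+1) : ℕ) : WithTop ℕ∞) + 1 = ((q - j : ℕ) : WithTop ℕ∞) by
        exact_mod_cast congrArg (Nat.cast : ℕ → WithTop ℕ∞) hsub]
    have hHc' : ContDiffOn ℝ ((q - (j+1) : ℕ)) H (Icc 0 1) :=
      hHc.of_le (by exact_mod_cast Nat.sub_le_sub_left (by omega) q)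
    have hφ' : ContDiffOn ℝ ((q - (j+1) : ℕ)) φ (Icc 0 1) :=
      hφ.of_le (by exact_mod_cast Nat.sub_le q (j+1))
    set s : Set ℝ := Icc (0:ℝ) 1
    refine ⟨fun y => ε * derivWithin H s y + σ * φ y * H y, ?_, ?_, ?_⟩
    · exact (contDiffOn_const.mul hder).add ((contDiffOn_const.mul hφ').mul hHc')
    · intro m hm x hx
      have hm' : (m : WithTop ℕ∞) ≤ ((q - (j+1) : ℕ) : WithTop ℕ∞) := by exact_mod_cast hm
      have hf1 : ContDiffOn ℝ m (fun y => ε * derivWithin H s y) s :=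
        (contDiffOn_const.mul hder).of_le hm'
      have hf2 : ContDiffOn ℝ m (fun y => σ * φ y * H y) s :=
        ((contDiffOn_const.mul hφ').mul hHc').of_le hm'
      rw [show (fun y => ε * derivWithin H s y + σ * φ y * H y)
            = ((fun y => ε * derivWithin H s y) + (fun y => σ * φ y * H y)) from rfl,
        iteratedDerivWithin_add hx hsU (hf1 x hx) (hf2 x hx)]
      have hK0 : (0:ℝ) ≤ M * (1 + 2^q * Dphi)^j := by positivity
      have t1 : |iteratedDerivWithin m (fun y => ε * derivWithin H s y) s x|
          ≤ M * (1 + 2^q * Dphi)^j := by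
        rw [iteratedDerivWithin_const_mul hx hsU ε ((hder.of_le hm') x hx), abs_mul,
          ← iteratedDerivWithin_succ', abs_of_pos hε]
        have := hHb (m+1) (by omega) x hx
        nlinarith [abs_nonneg (iteratedDerivWithin (m+1) H s x)]
      have t2 : |iteratedDerivWithin m (fun y => σ * φ y * H y) s x|
          ≤ 2^q * Dphi * (M * (1 + 2^q * Dphi)^j) := by
        have hmul := norm_iteratedFDerivWithin_mul_le (𝕜 := ℝ)
          (f := fun y => σ * φ y) (g := H) (N := (m : WithTop ℕ∞))
          ((contDiffOn_const.mul hφ').of_le hm') (hHc'.of_le hm') hsU hx le_rfl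
        rw [← Real.norm_eq_abs, ← norm_iteratedFDerivWithin_eq_norm_iteratedDerivWithin]
        refine hmul.trans ?_
        have hbound : ∀ i ∈ Finset.range (m+1),
            (m.choose i : ℝ) * ‖iteratedFDerivWithin ℝ i (fun y => σ * φ y) s x‖ *
              ‖iteratedFDerivWithin ℝ (m - i) H s x‖
            ≤ (m.choose i : ℝ) * (Dphi * (M * (1 + 2^q * Dphi)^j)) := by
          intro i hi
          have hi' : i ≤ m := by simpa using Nat.lt_succ_iff.1 (Finset.mem_range.1 hi)
          have h1 : ‖iteratedFDerivWithin ℝ i (fun y => σ * φ y) s x‖ ≤ Dphi := by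
            rw [norm_iteratedFDerivWithin_eq_norm_iteratedDerivWithin, Real.norm_eq_abs,
              iteratedDerivWithin_const_mul hx hsU σ ((hφ'.of_le (by exact_mod_cast hi'.trans hm)) x hx),
              abs_mul, hσ, one_mul]
            exact hφb i (by omega) x hx
          have h2 : ‖iteratedFDerivWithin ℝ (m - i) H s x‖ ≤ M * (1 + 2^q * Dphi)^j := by
            rw [norm_iteratedFDerivWithin_eq_norm_iteratedDerivWithin, Real.norm_eq_abs]
            exact hHb (m - i) (by omega) x hx
          have hc0 : (0:ℝ) ≤ (m.choose i : ℝ) := by positivity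
          have := mul_le_mul h1 h2 (norm_nonneg _) hD
          nlinarith [norm_nonneg (iteratedFDerivWithin ℝ i (fun y => σ * φ y) s x)]
        refine (Finset.sum_le_sum hbound).trans ?_
        rw [← Finset.sum_mul, ← Nat.cast_sum]
        rw [Nat.sum_range_choose]
        have h2m : ((2^m : ℕ) : ℝ) ≤ (2:ℝ)^q := by
          push_cast
          exact pow_le_pow_right₀ (by norm_num) (by omega)
        have hP : (0:ℝ) ≤ Dphi * (M * (1 + 2^q * Dphi)^j) := by positivity
        nlinarith
      calc |iteratedDerivWithin m (fun y => ε * derivWithin H s y) s x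
            + iteratedDerivWithin m (fun y => σ * φ y * H y) s x|
          ≤ |iteratedDerivWithin m (fun y => ε * derivWithin H s y) s x|
            + |iteratedDerivWithin m (fun y => σ * φ y * H y) s x| := abs_add_le _ _
        _ ≤ M * (1 + 2^q * Dphi)^j + 2^q * Dphi * (M * (1 + 2^q * Dphi)^j) := by linarith
        _ = M * (1 + 2^q * Dphi)^(j+1) := by ring
    · intro x hx
      rw [iteratedDerivWithin_succ]
      have hcong : derivWithin (iteratedDerivWithin j (fun y => ε * G y * E y) s) s x
          = derivWithin (fun y => ε ^ ((1:ℤ) - (j:ℤ)) * H y * E y) s x :=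
        derivWithin_congr (fun y hy => hHeq y hy) (hHeq x hx)
      rw [hcong]
      have hHd : HasDerivWithinAt H (derivWithin H s x) s x :=
        ((hHc.differentiableOn (by exact_mod_cast (show q - j ≠ 0 by omega))) x hx).hasDerivWithinAt
      have hEd := hE x hx
      have hprod : HasDerivWithinAt (fun y => ε ^ ((1:ℤ) - (j:ℤ)) * H y * E y)
          ((ε ^ ((1:ℤ) - (j:ℤ)) * derivWithin H s x) * E x
            + (ε ^ ((1:ℤ) - (j:ℤ)) * H x) * (σ * φ x / ε * E x)) s x :=
        (hHd.const_mul (ε ^ ((1:ℤ) - (j:ℤ)))).mul hEd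
      rw [hprod.derivWithin (hsU.uniqueDiffWithinAt hx)]
      have hzp : ε ^ ((1:ℤ) - (j:ℤ)) = ε ^ ((1:ℤ) - ((j:ℤ)+1)) * ε := by
        rw [← zpow_add_one₀ hε.ne']
        congr 1
        ring
      rw [hzp]
      push_cast
      field_simp

lemma intInt {φ : ℝ → ℝ} (hφc : ContinuousOn φ (Icc 0 1)) {u v : ℝ} (hu : u ∈ Icc (0:ℝ) 1)
    (hv : v ∈ Icc (0:ℝ) 1) : IntervalIntegrable φ volume u v := by
  apply ContinuousOn.intervalIntegrable
  apply hφc.mono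
  exact uIcc_subset_Icc hu hv

lemma hasDerivWithinAt_primitive' {φ : ℝ → ℝ} (hφc : ContinuousOn φ (Icc 0 1)) {x : ℝ}
    (hx : x ∈ Icc (0:ℝ) 1) :
    HasDerivWithinAt (fun y => ∫ s in (0:ℝ)..y, φ s) (φ x) (Icc 0 1) x := by
  haveI : Fact (x ∈ Icc (0:ℝ) 1) := ⟨hx⟩
  exact integral_hasDerivWithinAt_right (intInt hφc (left_mem_Icc.2 one_pos.le) hx)
    (hφc.stronglyMeasurableAtFilter_nhdsWithin measurableSet_Icc x) (hφc x hx)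

/-- boundary-layer decomposition `u = u_S + u_BL^L + u_BL^R` of a
function having the Moser-type representation, with derivative bounds that are
uniform in `ε` (the constants `C_j` depend only on `M`, `q`; `β = √a₀`). -/
theorem stmt_1 (q : ℕ) (M a₀ : ℝ) (hM : 0 < M) (ha₀ : 0 < a₀) :
    ∃ C : ℕ → ℝ, (∀ j, 0 < C j) ∧
    ∀ (ε : ℝ), ε ∈ Set.Ioc (0:ℝ) 1 →
    ∀ (a G₀ G₁ G₂ u : ℝ → ℝ),
      ContDiffOn ℝ q a (Set.Icc 0 1) →
      (∀ x ∈ Set.Icc (0:ℝ) 1, a₀ ≤ a x) →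
      (∀ m, m ≤ q → ∀ x ∈ Set.Icc (0:ℝ) 1,
        |iteratedDerivWithin m a (Set.Icc 0 1) x| ≤ M) →
      ContDiffOn ℝ q G₀ (Set.Icc 0 1) →
      ContDiffOn ℝ q G₁ (Set.Icc 0 1) →
      ContDiffOn ℝ q G₂ (Set.Icc 0 1) →
      (∀ m, m ≤ q → ∀ x ∈ Set.Icc (0:ℝ) 1,
        |iteratedDerivWithin m G₀ (Set.Icc 0 1) x| ≤ M) →
      (∀ m, m ≤ q → ∀ x ∈ Set.Icc (0:ℝ) 1,
        |iteratedDerivWithin m G₁ (Set.Icc 0 1) x| ≤ M) →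
      (∀ m, m ≤ q → ∀ x ∈ Set.Icc (0:ℝ) 1,
        |iteratedDerivWithin m G₂ (Set.Icc 0 1) x| ≤ M) →
      (∀ x ∈ Set.Icc (0:ℝ) 1,
        u x = G₀ x
          + ε * G₁ x * Real.exp (-(1/ε) * ∫ s in (0:ℝ)..x, Real.sqrt (a s))
          + ε * G₂ x * Real.exp (-(1/ε) * ∫ s in x..(1:ℝ), Real.sqrt (a s))) →
      -- the decomposition u = u_S + u_BL^L + u_BL^R ...
      (∀ x ∈ Set.Icc (0:ℝ) 1,
        u x = G₀ x
          + (fun y => ε * G₁ y * Real.exp (-(1/ε) * ∫ s in (0:ℝ)..y, Real.sqrt (a s)) ) x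
          + (fun y => ε * G₂ y * Real.exp (-(1/ε) * ∫ s in y..(1:ℝ), Real.sqrt (a s))) x) ∧
      -- ... together with the uniform derivative bounds, with β = √a₀
      (∀ j, j ≤ q → ∀ x ∈ Set.Icc (0:ℝ) 1,
        |iteratedDerivWithin j G₀ (Set.Icc 0 1) x| ≤ C j ∧
        |iteratedDerivWithin j
            (fun y => ε * G₁ y * Real.exp (-(1/ε) * ∫ s in (0:ℝ)..y, Real.sqrt (a s)))
            (Set.Icc 0 1) x|
          ≤ C j * ε ^ ((1:ℤ) - (j:ℤ)) * Real.exp (-(Real.sqrt a₀) * x / ε) ∧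
        |iteratedDerivWithin j
            (fun y => ε * G₂ y * Real.exp (-(1/ε) * ∫ s in y..(1:ℝ), Real.sqrt (a s)))
            (Set.Icc 0 1) x|
          ≤ C j * ε ^ ((1:ℤ) - (j:ℤ)) * Real.exp (-(Real.sqrt a₀) * (1 - x) / ε)) := by
  classical
  set Csq : ℝ := ∑ i ∈ Finset.range (q+1), |sqrtC i| * (Real.sqrt M + a₀ ^ ((1:ℝ)/2 - i))
    with hCsqdef
  have htermnn : ∀ i : ℕ, (0:ℝ) ≤ |sqrtC i| * (Real.sqrt M + a₀ ^ ((1:ℝ)/2 - i)) := by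
    intro i
    exact mul_nonneg (abs_nonneg _)
      (add_nonneg (Real.sqrt_nonneg _) (Real.rpow_nonneg ha₀.le _))
  have hCsq0 : 0 ≤ Csq := Finset.sum_nonneg (fun i _ => htermnn i)
  set Dphi : ℝ := (q.factorial : ℝ) * Csq * (1 + M)^q with hDdef
  have hD0 : 0 ≤ Dphi := by positivity
  have hCsq : ∀ i, i ≤ q → |sqrtC i| * (Real.sqrt M + a₀ ^ ((1:ℝ)/2 - i)) ≤ Csq := by
    intro i hi
    exact Finset.single_le_sum (f := fun k : ℕ => |sqrtC k| * (Real.sqrt M + a₀ ^ ((1:ℝ)/2 - k)))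
      (fun k _ => htermnn k) (Finset.mem_range.2 (by omega))
  refine ⟨fun j => M * (1 + 2^q * Dphi)^j, ?_, ?_⟩
  · intro j
    show (0:ℝ) < M * (1 + 2^q * Dphi)^j
    positivity
  intro ε hεm a G₀ G₁ G₂ u ha halb haub hG₀ hG₁ hG₂ hG₀b hG₁b hG₂b hu
  obtain ⟨hε0, hε1⟩ := hεm
  have hsU : UniqueDiffOn ℝ (Icc (0:ℝ) 1) := uniqueDiffOn_Icc one_pos
  have hφc : ContDiffOn ℝ q (fun y => Real.sqrt (a y)) (Icc 0 1) :=
    ha.sqrt (fun y hy => (lt_of_lt_of_le ha₀ (halb y hy)).ne')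
  have hφcont : ContinuousOn (fun y => Real.sqrt (a y)) (Icc 0 1) := by
    have := hφc.continuousOn
    exact this
  have hφb : ∀ n, n ≤ q → ∀ x ∈ Icc (0:ℝ) 1,
      |iteratedDerivWithin n (fun y => Real.sqrt (a y)) (Icc 0 1) x| ≤ Dphi :=
    phi_deriv_bound q M a₀ Csq ha₀ hM hCsq a ha halb haub
  have hββ : ∀ y ∈ Icc (0:ℝ) 1, Real.sqrt a₀ ≤ Real.sqrt (a y) :=
    fun y hy => Real.sqrt_le_sqrt (halb y hy)
  constructor
  · intro x hx
    simpa using hu x hx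
  intro j hj x hx
  have hone : (1:ℝ) ≤ (1 + 2^q * Dphi)^j := one_le_pow₀ (by nlinarith [hD0, pow_pos (by norm_num : (0:ℝ) < 2) q])
  refine ⟨?_, ?_, ?_⟩
  · -- G₀ bound
    show |iteratedDerivWithin j G₀ (Icc 0 1) x| ≤ M * (1 + 2^q * Dphi)^j
    have := hG₀b j hj x hx
    nlinarith
  · -- left boundary layer
    obtain ⟨H, hHc, hHb, hHeq⟩ := bl_induction q M Dphi ε (-1) hM hD0 hε0 hε1 (by norm_num)
      (fun y => Real.sqrt (a y)) G₁
      (fun y => Real.exp (-(1/ε) * ∫ s in (0:ℝ)..y, Real.sqrt (a s)))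
      hφc hφb hG₁ hG₁b
      (fun x' hx' => by
        have hA := hasDerivWithinAt_primitive' hφcont hx'
        have hc : HasDerivWithinAt (fun y => -(1/ε) * ∫ s in (0:ℝ)..y, Real.sqrt (a s))
            (-(1/ε) * Real.sqrt (a x')) (Icc 0 1) x' := hA.const_mul _
        have := hc.exp
        convert this using 1
        ring)
      j hj
    have heq := hHeq x hx
    have hHx : |H x| ≤ M * (1 + 2^q * Dphi)^j := by
      have := hHb 0 (Nat.zero_le _) x hx
      rwa [iteratedDerivWithin_zero] at this
    show |iteratedDerivWithin j
        (fun y => ε * G₁ y * (fun y => Real.exp (-(1/ε) * ∫ s in (0:ℝ)..y, Real.sqrt (a s))) y)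
        (Icc 0 1) x| ≤ _
    rw [heq]
    have hint : Real.sqrt a₀ * x ≤ ∫ s in (0:ℝ)..x, Real.sqrt (a s) := by
      have hmono := intervalIntegral.integral_mono_on hx.1 (intervalIntegrable_const)
        (intInt hφcont (left_mem_Icc.2 one_pos.le) hx)
        (fun s hs => hββ s ⟨hs.1, hs.2.trans hx.2⟩)
      rw [intervalIntegral.integral_const] at hmono
      simpa [mul_comm] using hmono
    have hexp : Real.exp (-(1/ε) * ∫ s in (0:ℝ)..x, Real.sqrt (a s))
        ≤ Real.exp (-(Real.sqrt a₀) * x / ε) := by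
      have h2 := mul_le_mul_of_nonneg_left hint (by positivity : (0:ℝ) ≤ 1/ε)
      have h3 : -(Real.sqrt a₀) * x / ε = -(1/ε * (Real.sqrt a₀ * x)) := by ring
      apply Real.exp_le_exp.2
      rw [h3]
      linarith
    have hzpos : (0:ℝ) < ε ^ ((1:ℤ) - (j:ℤ)) := zpow_pos hε0 _
    rw [abs_mul, abs_mul, abs_of_pos hzpos, abs_of_pos (Real.exp_pos _)]
    calc ε ^ ((1:ℤ) - (j:ℤ)) * |H x| * Real.exp (-(1/ε) * ∫ s in (0:ℝ)..x, Real.sqrt (a s))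
        ≤ ε ^ ((1:ℤ) - (j:ℤ)) * (M * (1 + 2^q * Dphi)^j) * Real.exp (-(Real.sqrt a₀) * x / ε) := by
          apply mul_le_mul (mul_le_mul_of_nonneg_left hHx hzpos.le) hexp
            (Real.exp_pos _).le (by positivity)
      _ = M * (1 + 2^q * Dphi)^j * ε ^ ((1:ℤ) - (j:ℤ)) * Real.exp (-(Real.sqrt a₀) * x / ε) := by
          ring
  · -- right boundary layer
    obtain ⟨H, hHc, hHb, hHeq⟩ := bl_induction q M Dphi ε 1 hM hD0 hε0 hε1 (by norm_num)
      (fun y => Real.sqrt (a y)) G₂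
      (fun y => Real.exp (-(1/ε) * ∫ s in y..(1:ℝ), Real.sqrt (a s)))
      hφc hφb hG₂ hG₂b
      (fun x' hx' => by
        have hA := hasDerivWithinAt_primitive' hφcont hx'
        have hsplit : ∀ y ∈ Icc (0:ℝ) 1,
            (∫ s in y..(1:ℝ), Real.sqrt (a s))
              = (∫ s in (0:ℝ)..(1:ℝ), Real.sqrt (a s)) - ∫ s in (0:ℝ)..y, Real.sqrt (a s) := by
          intro y hy
          have := intervalIntegral.integral_add_adjacent_intervals
            (intInt hφcont (left_mem_Icc.2 one_pos.le) hy)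
            (intInt hφcont hy (right_mem_Icc.2 one_pos.le))
          linarith
        have hB : HasDerivWithinAt (fun y => ∫ s in y..(1:ℝ), Real.sqrt (a s))
            (-(Real.sqrt (a x'))) (Icc 0 1) x' := by
          have hB' : HasDerivWithinAt
              (fun y => (∫ s in (0:ℝ)..(1:ℝ), Real.sqrt (a s)) - ∫ s in (0:ℝ)..y, Real.sqrt (a s))
              (-(Real.sqrt (a x'))) (Icc 0 1) x' := hA.const_sub _
          exact hB'.congr (fun y hy => hsplit y hy) (hsplit x' hx')
        have hc : HasDerivWithinAt (fun y => -(1/ε) * ∫ s in y..(1:ℝ), Real.sqrt (a s))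
            (-(1/ε) * -(Real.sqrt (a x'))) (Icc 0 1) x' := hB.const_mul _
        have := hc.exp
        convert this using 1
        ring)
      j hj
    have heq := hHeq x hx
    have hHx : |H x| ≤ M * (1 + 2^q * Dphi)^j := by
      have := hHb 0 (Nat.zero_le _) x hx
      rwa [iteratedDerivWithin_zero] at this
    show |iteratedDerivWithin j
        (fun y => ε * G₂ y * (fun y => Real.exp (-(1/ε) * ∫ s in y..(1:ℝ), Real.sqrt (a s))) y)
        (Icc 0 1) x| ≤ _
    rw [heq]
    have hint : Real.sqrt a₀ * (1 - x) ≤ ∫ s in x..(1:ℝ), Real.sqrt (a s) := by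
      have hmono := intervalIntegral.integral_mono_on hx.2 (intervalIntegrable_const)
        (intInt hφcont hx (right_mem_Icc.2 one_pos.le))
        (fun s hs => hββ s ⟨hx.1.trans hs.1, hs.2⟩)
      rw [intervalIntegral.integral_const] at hmono
      have : (1 - x) * Real.sqrt a₀ ≤ ∫ s in x..(1:ℝ), Real.sqrt (a s) := by simpa using hmono
      linarith [this]
    have hexp : Real.exp (-(1/ε) * ∫ s in x..(1:ℝ), Real.sqrt (a s))
        ≤ Real.exp (-(Real.sqrt a₀) * (1 - x) / ε) := by
      have h2 := mul_le_mul_of_nonneg_left hint (by positivity : (0:ℝ) ≤ 1/ε)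
      have h3 : -(Real.sqrt a₀) * (1 - x) / ε = -(1/ε * (Real.sqrt a₀ * (1 - x))) := by ring
      apply Real.exp_le_exp.2
      rw [h3]
      linarith
    have hzpos : (0:ℝ) < ε ^ ((1:ℤ) - (j:ℤ)) := zpow_pos hε0 _
    rw [abs_mul, abs_mul, abs_of_pos hzpos, abs_of_pos (Real.exp_pos _)]
    calc ε ^ ((1:ℤ) - (j:ℤ)) * |H x| * Real.exp (-(1/ε) * ∫ s in x..(1:ℝ), Real.sqrt (a s))
        ≤ ε ^ ((1:ℤ) - (j:ℤ)) * (M * (1 + 2^q * Dphi)^j)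
            * Real.exp (-(Real.sqrt a₀) * (1 - x) / ε) := by
          apply mul_le_mul (mul_le_mul_of_nonneg_left hHx hzpos.le) hexp
            (Real.exp_pos _).le (by positivity)
      _ = M * (1 + 2^q * Dphi)^j * ε ^ ((1:ℤ) - (j:ℤ))
            * Real.exp (-(Real.sqrt a₀) * (1 - x) / ε) := by
          ring
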